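/- On ℝ² with coordinates (t,x), define the vector fields X̄₁(t,x) = (1, t + x) and X̄₂(t,x) = (1, (1+t)³ + t + (3(1+t)² + 1)x + 3(1+t)x² + x³). Then [X̄₁, X̄₂] = 2(X̄₂ − X̄₁). -/

import Mathlib

/-- The Lie bracket of vector fields: `[A,B](p) = DB(p)·A(p) − DA(p)·B(p)`. -/
noncomputable def lieBr {E : Type*} [NormedAddCommGroup E] [NormedSpace ℝ E]
    (A B : E → E) : E → E :=
  fun p => fderiv ℝ B p (A p) - fderiv ℝ A p (B p)

/-- The autonomization `X̄₁(t,x) = (1, t + x)` of `X₁(t,x) = (t+x)∂/∂x`. -/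
def abelX1 : ℝ × ℝ → ℝ × ℝ := fun p => (1, p.1 + p.2)

/-- The autonomization `X̄₂(t,x) = (1, (1+t)³ + t + (3(1+t)² + 1)x + 3(1+t)x² + x³)` of
`X₂(t,x) = ((1+t)³ + t + (3(1+t)²+1)x + 3(1+t)x² + x³)∂/∂x`. -/
def abelX2 : ℝ × ℝ → ℝ × ℝ := fun p =>
  (1, (1 + p.1) ^ 3 + p.1 + (3 * (1 + p.1) ^ 2 + 1) * p.2
        + 3 * (1 + p.1) * p.2 ^ 2 + p.2 ^ 3)

lemma abelX2_eq : abelX2 = fun p : ℝ × ℝ => (1, (1 + (p.1 + p.2)) ^ 3 + (p.1 + p.2)) := by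
  funext q
  unfold abelX2
  refine Prod.ext rfl ?_
  ring

/-- On `ℝ²` with coordinates `(t,x)`, the vector fields `X̄₁(t,x) = (1, t + x)` and
`X̄₂(t,x) = (1, (1+t)³ + t + (3(1+t)² + 1)x + 3(1+t)x² + x³)` satisfy
`[X̄₁, X̄₂] = 2(X̄₂ − X̄₁)`. -/
theorem abel_bracket : ∀ p : ℝ × ℝ,
    lieBr abelX1 abelX2 p = (2 : ℝ) • (abelX2 p - abelX1 p) := by
  intro p
  set s : ℝ := p.1 + p.2 with hs
  have hsum : HasFDerivAt (fun q : ℝ × ℝ => q.1 + q.2)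
      (ContinuousLinearMap.fst ℝ ℝ ℝ + ContinuousLinearMap.snd ℝ ℝ ℝ) p :=
    hasFDerivAt_fst.add hasFDerivAt_snd
  have hA : HasFDerivAt abelX1
      ((0 : ℝ × ℝ →L[ℝ] ℝ).prod
        (ContinuousLinearMap.fst ℝ ℝ ℝ + ContinuousLinearMap.snd ℝ ℝ ℝ)) p :=
    HasFDerivAt.prodMk (hasFDerivAt_const (1 : ℝ) p) hsum
  have hh : HasDerivAt (fun u : ℝ => (1 + u) ^ 3 + u) (3 * (1 + s) ^ 2 + 1) s := by
    have h := (((hasDerivAt_id s).const_add 1).pow 3).add (hasDerivAt_id s)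
    have h : HasDerivAt (fun u : ℝ => (1 + u) ^ 3 + u) _ s := h
    simpa [mul_comm, mul_assoc, mul_left_comm] using h
  have hB2 : HasFDerivAt (fun q : ℝ × ℝ => (1 + (q.1 + q.2)) ^ 3 + (q.1 + q.2))
      ((3 * (1 + s) ^ 2 + 1) •
        (ContinuousLinearMap.fst ℝ ℝ ℝ + ContinuousLinearMap.snd ℝ ℝ ℝ)) p :=
    by exact hh.comp_hasFDerivAt p hsum
  have hB : HasFDerivAt abelX2
      ((0 : ℝ × ℝ →L[ℝ] ℝ).prod
        ((3 * (1 + s) ^ 2 + 1) •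
          (ContinuousLinearMap.fst ℝ ℝ ℝ + ContinuousLinearMap.snd ℝ ℝ ℝ))) p := by
    rw [abelX2_eq]
    exact HasFDerivAt.prodMk (hasFDerivAt_const (1 : ℝ) p) hB2
  unfold lieBr
  rw [hA.fderiv, hB.fderiv, abelX2_eq]
  unfold abelX1
  simp only [ContinuousLinearMap.prod_apply, ContinuousLinearMap.zero_apply,
    ContinuousLinearMap.smul_apply, ContinuousLinearMap.add_apply,
    ContinuousLinearMap.coe_fst', ContinuousLinearMap.coe_snd', smul_eq_mul,
    Prod.smul_mk, Prod.mk_sub_mk, Prod.smul_def]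
  refine Prod.ext (by simp) ?_
  simp only [← hs]
  ring
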